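/- If the density ratio has the log-linear form r(x,y) = exp(λ₀ + ⟨λ₁, b(x)⟩) for μ1-almost every (x,y), then the selection probability follows the logistic model: P-almost surely, E[1_{δ=1} | σ(X,Y)] = 1/(1 + ((1−p)/p)·exp(λ₀ + ⟨λ₁, b(X)⟩)). (The paper's claimed equivalence between the log-linear density-ratio model (12) and the logistic selection-probability model (13).) -/

import Mathlib

open MeasureTheory ProbabilityTheory

/-- **Equivalence of the log-linear density-ratio model (12) and the logistic selection
model (13).** If the density ratio `r = dμ0/dμ1` satisfies
`r(x,y) = exp(λ₀ + ⟨λ₁, b(x)⟩)` for `μ1`-a.e. `(x,y)`, then P-a.s.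
`E[1_{δ=1} | σ(X,Y)] = 1/(1 + ((1−p)/p)·exp(λ₀ + ⟨λ₁, b(X)⟩))`. -/
theorem stmt_13
    {Ω : Type*} [MeasurableSpace Ω] (P : Measure Ω) [IsProbabilityMeasure P]
    {S₁ S₂ : Type*} [MeasurableSpace S₁] [MeasurableSpace S₂]
    (δ : Ω → Bool) (hδ : Measurable δ)
    (X : Ω → S₁) (hX : Measurable X)
    (Y : Ω → S₂) (hY : Measurable Y)
    (p : ℝ) (hp_def : p = (P {ω | δ ω = true}).toReal)
    (hp0 : 0 < p) (hp1 : p < 1)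
    (μ1 μ0 : Measure (S₁ × S₂))
    (hμ1 : ∀ A : Set (S₁ × S₂), MeasurableSet A →
      μ1 A = P ((fun ω => (X ω, Y ω)) ⁻¹' A ∩ {ω | δ ω = true}) / ENNReal.ofReal p)
    (hμ0 : ∀ A : Set (S₁ × S₂), MeasurableSet A →
      μ0 A = P ((fun ω => (X ω, Y ω)) ⁻¹' A ∩ {ω | δ ω = false}) / ENNReal.ofReal (1 - p))
    (hac : μ0 ≪ μ1)
    (r : S₁ × S₂ → ℝ) (hr_meas : Measurable r) (hr_nonneg : ∀ v, 0 ≤ r v)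
    (hr : μ0 = μ1.withDensity (fun v => ENNReal.ofReal (r v)))
    {L : ℕ} (b : S₁ → EuclideanSpace ℝ (Fin L)) (hb : Measurable b)
    (lam0 : ℝ) (lam1 : EuclideanSpace ℝ (Fin L))
    (hmodel : ∀ᵐ v ∂μ1, r v = Real.exp (lam0 + (inner ℝ lam1 (b v.1) : ℝ))) :
    ∀ᵐ ω ∂P,
      (P[(fun ω' => if δ ω' then (1 : ℝ) else 0) |
          MeasurableSpace.comap (fun ω' => (X ω', Y ω')) inferInstance]) ω
        = 1 / (1 + ((1 - p) / p) * Real.exp (lam0 + (inner ℝ lam1 (b (X ω)) : ℝ))) := by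
  classical
  -- Basic setup
  set V : Ω → S₁ × S₂ := fun ω => (X ω, Y ω) with hV_def
  have hV : Measurable V := hX.prodMk hY
  have hm := hV.comap_le
  set T : Set Ω := {ω | δ ω = true} with hT_def
  have hT : MeasurableSet T := hδ (measurableSet_singleton true)
  set F : Set Ω := {ω | δ ω = false} with hF_def
  have hF : MeasurableSet F := hδ (measurableSet_singleton false)
  have hTc : Tᶜ = F := by
    ext ω; simp [hT_def, hF_def]
  -- the constant and the candidate function
  set c : ℝ := (1 - p) / p with hc_def
  have hc_pos : 0 < c := div_pos (by linarith) hp0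
  set G : S₁ × S₂ → ℝ :=
    fun v => 1 / (1 + c * Real.exp (lam0 + (inner ℝ lam1 (b v.1) : ℝ))) with hG_def
  have hden : ∀ v : S₁ × S₂, (0:ℝ) < 1 + c * Real.exp (lam0 + (inner ℝ lam1 (b v.1) : ℝ)) := by
    intro v; positivity
  have hG_pos : ∀ v, 0 < G v := fun v => by
    simpa [hG_def] using one_div_pos.mpr (hden v)
  have hG_le : ∀ v, G v ≤ 1 := fun v => by
    rw [hG_def]
    rw [div_le_one (hden v)]
    nlinarith [Real.exp_pos (lam0 + (inner ℝ lam1 (b v.1) : ℝ)), hc_pos]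
  have hinner_meas : Measurable fun v : S₁ × S₂ => (inner ℝ lam1 (b v.1) : ℝ) :=
    measurable_const.inner (hb.comp measurable_fst)
  have hG_meas : Measurable G := by
    apply Measurable.div measurable_const
    exact measurable_const.add
      (measurable_const.mul ((measurable_const.add hinner_meas).exp))
  -- probabilities
  have hPT : P T = ENNReal.ofReal p := by
    rw [hp_def]; exact (ENNReal.ofReal_toReal (measure_ne_top P T)).symm
  have hPF : P F = ENNReal.ofReal (1 - p) := by
    rw [← hTc, prob_compl_eq_one_sub hT, hPT,
      ENNReal.ofReal_sub _ hp0.le, ENNReal.ofReal_one]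
  have hp_ne0 : ENNReal.ofReal p ≠ 0 := (ENNReal.ofReal_pos.mpr hp0).ne' 
  have hp_neT : ENNReal.ofReal p ≠ ⊤ := ENNReal.ofReal_ne_top
  have hq_ne0 : ENNReal.ofReal (1 - p) ≠ 0 :=
    (ENNReal.ofReal_pos.mpr (by linarith)).ne' 
  have hq_neT : ENNReal.ofReal (1 - p) ≠ ⊤ := ENNReal.ofReal_ne_top
  -- the conditional laws
  have hmap1 : Measure.map V (P.restrict T) = ENNReal.ofReal p • μ1 := by
    ext B hB
    rw [Measure.map_apply hV hB, Measure.restrict_apply (hV hB), Measure.smul_apply,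
      smul_eq_mul, hμ1 B hB, ENNReal.mul_div_cancel hp_ne0 hp_neT]
  have hmap0 : Measure.map V (P.restrict F) = ENNReal.ofReal (1 - p) • μ0 := by
    ext B hB
    rw [Measure.map_apply hV hB, Measure.restrict_apply (hV hB), Measure.smul_apply,
      smul_eq_mul, hμ0 B hB, ENNReal.mul_div_cancel hq_ne0 hq_neT]
  have hμ1_fin : IsFiniteMeasure μ1 := by
    constructor
    rw [hμ1 Set.univ MeasurableSet.univ]
    exact ENNReal.div_lt_top (measure_ne_top P _) hp_ne0
  have hμ0_fin : IsFiniteMeasure μ0 := by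
    constructor
    rw [hμ0 Set.univ MeasurableSet.univ]
    exact ENNReal.div_lt_top (measure_ne_top P _) hq_ne0
  -- integrability facts
  set f : Ω → ℝ := fun ω' => if δ ω' then (1 : ℝ) else 0 with hf_def
  have hf_eq : f = T.indicator fun _ => (1:ℝ) := by
    funext ω; by_cases h : δ ω = true <;> simp [hf_def, hT_def, Set.indicator_apply, h]
  have hf_int : Integrable f P := by
    rw [hf_eq]; exact (integrable_const (1:ℝ)).indicator hT
  set g : Ω → ℝ := fun ω => G (V ω) with hg_def
  have hg_int : Integrable g P := by
    refine Integrable.mono' (integrable_const (1:ℝ))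
      ((hG_meas.comp hV).aestronglyMeasurable) ?_
    filter_upwards with ω
    rw [Real.norm_eq_abs, abs_of_pos (hG_pos (V ω))]
    exact hG_le (V ω)
  have hG_int1 : ∀ B : Set (S₁ × S₂), Integrable G (μ1.restrict B) := by
    intro B
    refine Integrable.mono' (integrable_const (1:ℝ)) hG_meas.aestronglyMeasurable ?_
    filter_upwards with v
    rw [Real.norm_eq_abs, abs_of_pos (hG_pos v)]
    exact hG_le v
  -- r * G is a.e. bounded by 1/c
  have hrG_bound : ∀ᵐ v ∂μ1, ‖r v * G v‖ ≤ 1 / c := by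
    filter_upwards [hmodel] with v hv
    rw [Real.norm_eq_abs, abs_of_nonneg (mul_nonneg (hr_nonneg v) (hG_pos v).le), hv, hG_def]
    rw [mul_one_div, div_le_div_iff₀ (hden v) hc_pos]
    nlinarith [Real.exp_pos (lam0 + (inner ℝ lam1 (b v.1) : ℝ)), hc_pos]
  have hrG_int1 : ∀ B : Set (S₁ × S₂), MeasurableSet B →
      Integrable (fun v => r v * G v) (μ1.restrict B) := by
    intro B hB
    refine Integrable.mono' (integrable_const (1/c)) ((hr_meas.mul hG_meas).aestronglyMeasurable)
      (ae_restrict_of_ae hrG_bound)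
  -- pointwise identity
  have hpoint : ∀ v : S₁ × S₂,
      p * G v + (1 - p) * (Real.exp (lam0 + (inner ℝ lam1 (b v.1) : ℝ)) * G v) = p := by
    intro v
    have h1 : G v * (1 + c * Real.exp (lam0 + (inner ℝ lam1 (b v.1) : ℝ))) = 1 := by
      simp only [hG_def]
      exact one_div_mul_cancel (hden v).ne'
    have hpc : p * c = 1 - p := by
      rw [hc_def]; field_simp
    linear_combination p * h1 - Real.exp (lam0 + (inner ℝ lam1 (b v.1) : ℝ)) * G v * hpc
  -- key computation of set integrals
  have hkey : ∀ B : Set (S₁ × S₂), MeasurableSet B →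
      ∫ ω in V ⁻¹' B, g ω ∂P = ∫ ω in V ⁻¹' B, f ω ∂P := by
    intro B hB
    have hPB : P (V ⁻¹' B ∩ T) = ENNReal.ofReal p * μ1 B := by
      rw [hμ1 B hB, ENNReal.mul_div_cancel hp_ne0 hp_neT]
    -- RHS
    have hRHS : ∫ ω in V ⁻¹' B, f ω ∂P = p * (μ1 B).toReal := by
      rw [hf_eq, setIntegral_indicator hT, setIntegral_const, smul_eq_mul, mul_one, measureReal_def, hPB,
        ENNReal.toReal_mul, ENNReal.toReal_ofReal hp0.le]
    -- split LHS over T and Tᶜ = F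
    have hsplit : ∫ ω in V ⁻¹' B, g ω ∂P
        = ∫ ω in V ⁻¹' B, g ω ∂(P.restrict T) + ∫ ω in V ⁻¹' B, g ω ∂(P.restrict F) := by
      have h1 := integral_add_compl hT (hg_int.integrableOn (s := V ⁻¹' B))
      rw [← h1, Measure.restrict_restrict hT, Measure.restrict_restrict hT.compl, hTc,
        Measure.restrict_restrict (hV hB), Measure.restrict_restrict (hV hB),
        Set.inter_comm T, Set.inter_comm F]
    have hmapG1 : ∫ ω in V ⁻¹' B, g ω ∂(P.restrict T) = p * ∫ v in B, G v ∂μ1 := by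
      rw [hg_def, ← setIntegral_map hB (hG_meas.aestronglyMeasurable) hV.aemeasurable, hmap1,
        Measure.restrict_smul, integral_smul_measure, ENNReal.toReal_ofReal hp0.le, smul_eq_mul]
    have hmapG0 : ∫ ω in V ⁻¹' B, g ω ∂(P.restrict F)
        = (1 - p) * ∫ v in B, G v ∂μ0 := by
      rw [hg_def, ← setIntegral_map hB (hG_meas.aestronglyMeasurable) hV.aemeasurable, hmap0,
        Measure.restrict_smul, integral_smul_measure, ENNReal.toReal_ofReal (by linarith),
        smul_eq_mul]
    -- rewrite μ0 integral as μ1 integral with density r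
    have hwd : ∫ v in B, G v ∂μ0 = ∫ v in B, r v * G v ∂μ1 := by
      have : (fun v => ENNReal.ofReal (r v)) = fun v => ((r v).toNNReal : ENNReal) := rfl
      rw [hr, this, setIntegral_withDensity_eq_setIntegral_smul hr_meas.real_toNNReal G hB]
      apply integral_congr_ae
      filter_upwards with v
      rw [NNReal.smul_def, smul_eq_mul, Real.coe_toNNReal _ (hr_nonneg v)]
    -- combine
    rw [hsplit, hmapG1, hmapG0, hwd, hRHS]
    have hcomb : p * ∫ v in B, G v ∂μ1 + (1 - p) * ∫ v in B, r v * G v ∂μ1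
        = ∫ v in B, (p * G v + (1 - p) * (r v * G v)) ∂μ1 := by
      rw [integral_add ((hG_int1 B).const_mul p) ((hrG_int1 B hB).const_mul (1 - p)),
        integral_const_mul, integral_const_mul]
    rw [hcomb]
    have : ∫ v in B, (p * G v + (1 - p) * (r v * G v)) ∂μ1 = ∫ v in B, p ∂μ1 := by
      apply integral_congr_ae
      filter_upwards [ae_restrict_of_ae hmodel] with v hv
      rw [hv]
      exact hpoint v
    rw [this, setIntegral_const, smul_eq_mul, mul_comm, measureReal_def]
  -- apply uniqueness of conditional expectation
  haveI : SigmaFinite (P.trim hm) := by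
    haveI : IsFiniteMeasure (P.trim hm) := isFiniteMeasure_trim hm
    infer_instance
  have hVm : Measurable[MeasurableSpace.comap V inferInstance] V := fun s hs => ⟨s, hs, rfl⟩
  have hgm : AEStronglyMeasurable[MeasurableSpace.comap V inferInstance] g P :=
    StronglyMeasurable.aestronglyMeasurable
      (Measurable.stronglyMeasurable (hG_meas.comp hVm))
  have hmain : g =ᵐ[P] P[f | MeasurableSpace.comap V inferInstance] := by
    refine ae_eq_condExp_of_forall_setIntegral_eq hm hf_int
      (fun s _ _ => hg_int.integrableOn) (fun s hs _ => ?_) hgm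
    obtain ⟨B, hB, rfl⟩ := hs
    exact hkey B hB
  filter_upwards [hmain] with ω hω
  exact hω.symm
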